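/- arXiv:1606.09298 — 4 statements merged into one kernel-verified Lean document; each statement's English description precedes it below -/
import Mathlib

section
/- Let A ∈ ℝ^{p×n}, b ∈ ℝᵖ, μ > 0, f : ℝⁿ → ℝ convex differentiable, and let (x*, λ*) satisfy ∇f(x*) + (1/μ)Aᵀ(Ax* − b) + Aᵀλ* = 0 and Ax* = b. Define L(x, λ) = f(x) + (1/(2μ))‖Ax − b‖² + ⟨λ, Ax − b⟩ and V(x, λ) = f(x) − f(x*) + (1/(2μ))‖Ax − b‖² + ⟨λ, Ax − b⟩ + (1/2)(‖x − x*‖² + ‖λ − λ*‖²). Then for all (x, λ): V(x, λ) ≥ (1/2)⟨P(x − x*, λ − λ*), (x − x*, λ − λ*)⟩ where P = [[(1/μ)AᵀA + Iₙ, Aᵀ], [A, I_p]]. In particular, for μ ∈ (0,1], V(x, λ) ≥ (λ_min(P)/2)(‖x − x*‖² + ‖λ − λ*‖²) with λ_min(P) > 0. -/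
open Matrix

private lemma dot_self_nonneg {m : ℕ} (v : Fin m → ℝ) : 0 ≤ v ⬝ᵥ v :=
  Finset.sum_nonneg fun i _ => mul_self_nonneg (v i)

private lemma dot_self_pos {m : ℕ} {v : Fin m → ℝ} (hv : v ≠ 0) : 0 < v ⬝ᵥ v :=
  lt_of_le_of_ne (dot_self_nonneg v) (fun h => hv (dotProduct_self_eq_zero.mp h.symm))

private lemma quad_form {n p : ℕ} (A : Matrix (Fin p) (Fin n) ℝ) (μ : ℝ)
    (u : Fin n → ℝ) (w : Fin p → ℝ) :
    (Matrix.fromBlocks ((1 / μ) • (Aᵀ * A) + 1) Aᵀ A 1).mulVec (Sum.elim u w) ⬝ᵥ Sum.elim u w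
    = (1/μ) * ((A.mulVec u) ⬝ᵥ (A.mulVec u)) + u ⬝ᵥ u + 2 * (w ⬝ᵥ (A.mulVec u)) + w ⬝ᵥ w := by
  rw [Matrix.fromBlocks_mulVec]
  simp only [Sum.elim_comp_inl, Sum.elim_comp_inr, sumElim_dotProduct_sumElim,
    Matrix.add_mulVec, Matrix.smul_mulVec, Matrix.one_mulVec, ← Matrix.mulVec_mulVec,
    add_dotProduct, smul_dotProduct, smul_eq_mul]
  rw [Matrix.mulVec_transpose, Matrix.mulVec_transpose, ← Matrix.dotProduct_mulVec,
    ← Matrix.dotProduct_mulVec, dotProduct_comm (A.mulVec u) w]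
  ring

private lemma cauchy_bound {n p : ℕ} (A : Matrix (Fin p) (Fin n) ℝ) (u : Fin n → ℝ) :
    (A.mulVec u) ⬝ᵥ (A.mulVec u) ≤ (∑ i, ∑ j, (A i j)^2) * (u ⬝ᵥ u) := by
  have h1 : (A.mulVec u) ⬝ᵥ (A.mulVec u) = ∑ i, (∑ j, A i j * u j)^2 := by
    simp [dotProduct, Matrix.mulVec, sq]
  have h2 : u ⬝ᵥ u = ∑ j, (u j)^2 := by simp [dotProduct, sq]
  rw [h1, h2, Finset.sum_mul]
  refine Finset.sum_le_sum fun i _ => ?_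
  exact Finset.sum_mul_sq_le_sq_mul_sq Finset.univ _ _

theorem lyapunov_lower_quadratic_bound {n p : ℕ}
    (f : (Fin n → ℝ) → ℝ) (f' : (Fin n → ℝ) → (Fin n → ℝ))
    (hconv : ConvexOn ℝ Set.univ f)
    (hgrad : ∀ z y : Fin n → ℝ, f y ≥ f z + f' z ⬝ᵥ (y - z))
    (A : Matrix (Fin p) (Fin n) ℝ) (b : Fin p → ℝ)
    (μ : ℝ) (hμ : 0 < μ)
    (xs : Fin n → ℝ) (lams : Fin p → ℝ)
    (hstat : f' xs + (1 / μ) • Aᵀ.mulVec (A.mulVec xs - b) + Aᵀ.mulVec lams = 0)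
    (hfeas : A.mulVec xs = b)
    (V : (Fin n → ℝ) → (Fin p → ℝ) → ℝ)
    (hV : ∀ x lam, V x lam = f x - f xs
      + (1 / (2 * μ)) * ((A.mulVec x - b) ⬝ᵥ (A.mulVec x - b))
      + lam ⬝ᵥ (A.mulVec x - b)
      + (1 / 2) * ((x - xs) ⬝ᵥ (x - xs) + (lam - lams) ⬝ᵥ (lam - lams)))
    (P : Matrix (Fin n ⊕ Fin p) (Fin n ⊕ Fin p) ℝ)
    (hP : P = Matrix.fromBlocks ((1 / μ) • (Aᵀ * A) + 1) Aᵀ A 1) :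
    (∀ x lam, V x lam ≥ (1 / 2) *
      (P.mulVec (Sum.elim (x - xs) (lam - lams)) ⬝ᵥ Sum.elim (x - xs) (lam - lams))) ∧
    (μ ≤ 1 → P.PosDef ∧ ∃ c > (0 : ℝ), ∀ x lam,
      V x lam ≥ (c / 2) * ((x - xs) ⬝ᵥ (x - xs) + (lam - lams) ⬝ᵥ (lam - lams))) := by
  have hgradxs : f' xs = -(Aᵀ.mulVec lams) := by
    have h0 : A.mulVec xs - b = 0 := by rw [hfeas]; simp
    rw [h0] at hstat
    simp only [Matrix.mulVec_zero, smul_zero, add_zero] at hstat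
    exact eq_neg_of_add_eq_zero_left hstat
  -- key inequality from convexity + stationarity
  have hkey : ∀ x : Fin n → ℝ, 0 ≤ f x - f xs + lams ⬝ᵥ (A.mulVec (x - xs)) := by
    intro x
    have h1 := hgrad xs x
    have h2 : f' xs ⬝ᵥ (x - xs) = -(lams ⬝ᵥ (A.mulVec (x - xs))) := by
      rw [hgradxs, neg_dotProduct, Matrix.mulVec_transpose,
        ← Matrix.dotProduct_mulVec]
    rw [h2] at h1
    linarith
  have hAu : ∀ x : Fin n → ℝ, A.mulVec x - b = A.mulVec (x - xs) := by
    intro x; rw [Matrix.mulVec_sub, hfeas]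
  have hμ' : (1 : ℝ) / (2 * μ) = (1/2) * (1/μ) := by
    field_simp
  -- part 1
  have part1 : ∀ x lam, V x lam ≥ (1 / 2) *
      (P.mulVec (Sum.elim (x - xs) (lam - lams)) ⬝ᵥ Sum.elim (x - xs) (lam - lams)) := by
    intro x lam
    rw [hV, hP, quad_form, hAu]
    have h3 : (lam - lams) ⬝ᵥ (A.mulVec (x - xs))
        = lam ⬝ᵥ (A.mulVec (x - xs)) - lams ⬝ᵥ (A.mulVec (x - xs)) :=
      sub_dotProduct _ _ _
    have h4 := hkey x
    rw [hμ']
    nlinarith [h3, h4]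
  refine ⟨part1, fun hμ1 => ?_⟩
  have hinv : (1 : ℝ) ≤ 1 / μ := by
    rw [le_div_iff₀ hμ]; linarith
  -- quadratic form lower bound
  have hQ : ∀ (u : Fin n → ℝ) (w : Fin p → ℝ),
      u ⬝ᵥ u + (A.mulVec u + w) ⬝ᵥ (A.mulVec u + w)
      ≤ (Matrix.fromBlocks ((1 / μ) • (Aᵀ * A) + 1) Aᵀ A 1).mulVec (Sum.elim u w)
          ⬝ᵥ Sum.elim u w := by
    intro u w
    rw [quad_form]
    have hexp : (A.mulVec u + w) ⬝ᵥ (A.mulVec u + w)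
        = (A.mulVec u) ⬝ᵥ (A.mulVec u) + 2 * (w ⬝ᵥ (A.mulVec u)) + w ⬝ᵥ w := by
      simp only [add_dotProduct, dotProduct_add,
        dotProduct_comm (A.mulVec u) w]
      ring
    have haa := dot_self_nonneg (A.mulVec u)
    nlinarith [haa, hexp]
  constructor
  · -- positive definiteness
    refine Matrix.PosDef.of_dotProduct_mulVec_pos ?_ ?_
    · rw [hP]
      show _ᴴ = _
      rw [conjTranspose_eq_transpose_of_trivial, Matrix.fromBlocks_transpose,
        Matrix.transpose_add, Matrix.transpose_smul, Matrix.transpose_mul,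
        Matrix.transpose_transpose]
      simp
    · intro v hv
      have hrepr : v = Sum.elim (v ∘ Sum.inl) (v ∘ Sum.inr) := (Sum.elim_comp_inl_inr v).symm
      set u := v ∘ Sum.inl with hu
      set w := v ∘ Sum.inr with hw
      have hstar : star v = v := by
        funext i; simp
      rw [hstar]
      have hcomm : v ⬝ᵥ (P.mulVec v) = P.mulVec v ⬝ᵥ v := dotProduct_comm _ _
      rw [hcomm, hrepr, hP]
      have hb := hQ u w
      rcases eq_or_ne u 0 with h | h
      · have hwne : w ≠ 0 := by
          intro hw0
          apply hv
          rw [hrepr, h, hw0]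
          funext i; cases i <;> rfl
        have hAu0 : A.mulVec u = 0 := by rw [h, Matrix.mulVec_zero]
        have := dot_self_pos hwne
        have hu0 : u ⬝ᵥ u = 0 := by rw [h]; simp
        rw [hAu0, zero_add] at hb
        linarith
      · have := dot_self_pos h
        have := dot_self_nonneg (A.mulVec u + w)
        linarith
  · -- explicit constant
    set M : ℝ := ∑ i, ∑ j, (A i j)^2 with hM
    have hMnn : 0 ≤ M := Finset.sum_nonneg fun i _ =>
      Finset.sum_nonneg fun j _ => sq_nonneg _
    refine ⟨1 / (2 + 2 * M), by positivity, fun x lam => ?_⟩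
    set c : ℝ := 1 / (2 + 2 * M) with hc
    have hcden : c * (2 + 2 * M) = 1 := by
      rw [hc]; field_simp
    set u := x - xs with hu
    set w := lam - lams with hw
    have hb := hQ u w
    have hcs := cauchy_bound A u
    have hexp : (A.mulVec u + w) ⬝ᵥ (A.mulVec u + w)
        = (A.mulVec u) ⬝ᵥ (A.mulVec u) + 2 * (w ⬝ᵥ (A.mulVec u)) + w ⬝ᵥ w := by
      simp only [add_dotProduct, dotProduct_add,
        dotProduct_comm (A.mulVec u) w]
      ring
    have htt : 0 ≤ ((2:ℝ) • A.mulVec u + w) ⬝ᵥ ((2:ℝ) • A.mulVec u + w) :=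
      dot_self_nonneg _
    have httexp : ((2:ℝ) • A.mulVec u + w) ⬝ᵥ ((2:ℝ) • A.mulVec u + w)
        = 4 * ((A.mulVec u) ⬝ᵥ (A.mulVec u)) + 4 * (w ⬝ᵥ (A.mulVec u)) + w ⬝ᵥ w := by
      simp only [add_dotProduct, dotProduct_add, smul_dotProduct,
        dotProduct_smul, smul_eq_mul, dotProduct_comm (A.mulVec u) w]
      ring
    have hww : w ⬝ᵥ w ≤ 2 * ((A.mulVec u + w) ⬝ᵥ (A.mulVec u + w))
        + 2 * ((A.mulVec u) ⬝ᵥ (A.mulVec u)) := by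
      rw [httexp] at htt
      nlinarith [htt, hexp]
    have huu := dot_self_nonneg u
    have hs := dot_self_nonneg (A.mulVec u + w)
    have hMs : 0 ≤ M * ((A.mulVec u + w) ⬝ᵥ (A.mulVec u + w)) := mul_nonneg hMnn hs
    have hle : u ⬝ᵥ u + w ⬝ᵥ w
        ≤ (2 + 2 * M) * (u ⬝ᵥ u + (A.mulVec u + w) ⬝ᵥ (A.mulVec u + w)) := by
      nlinarith [hww, hcs, huu, hs, hMs]
    have hcle : c * (u ⬝ᵥ u + w ⬝ᵥ w)
        ≤ u ⬝ᵥ u + (A.mulVec u + w) ⬝ᵥ (A.mulVec u + w) := by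
      have hcpos : 0 < c := by rw [hc]; positivity
      calc c * (u ⬝ᵥ u + w ⬝ᵥ w)
          ≤ c * ((2 + 2 * M) * (u ⬝ᵥ u + (A.mulVec u + w) ⬝ᵥ (A.mulVec u + w))) :=
            mul_le_mul_of_nonneg_left hle hcpos.le
        _ = (c * (2 + 2 * M)) * (u ⬝ᵥ u + (A.mulVec u + w) ⬝ᵥ (A.mulVec u + w)) := by ring
        _ = _ := by rw [hcden, one_mul]
    have hp1 := part1 x lam
    rw [hP] at hp1
    linarith [hb, hcle, hp1]
end

section
/- Let A ∈ ℝ^{p×n} have full row rank p, μ ∈ (0,1), and H ∈ ℝ^{n×n} be symmetric positive definite. Then the block matrix Q = [[ H + (H + (1/μ)AᵀA)ᵀ(H + (1/μ)AᵀA) + ((1/μ)−1)AᵀA , HᵀAᵀ + (1/μ)AᵀAAᵀ ], [ AH + (1/μ)AAᵀA , AAᵀ ]] is symmetric positive definite. -/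
open Matrix

private lemma smul_posSemidef' {n : ℕ} {c : ℝ} (hc : 0 ≤ c)
    {M : Matrix (Fin n) (Fin n) ℝ} (hM : M.PosSemidef) : (c • M).PosSemidef := by
  refine posSemidef_iff_dotProduct_mulVec.mpr ⟨?_, fun x => ?_⟩
  · unfold Matrix.IsHermitian
    rw [conjTranspose_smul, hM.1]
    simp
  · rw [smul_mulVec, dotProduct_smul, smul_eq_mul]
    exact mul_nonneg hc (hM.dotProduct_mulVec_nonneg x)

theorem blockMatrix_Q_posDef {n p : ℕ}
    (A : Matrix (Fin p) (Fin n) ℝ) (hA : A.rank = p)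
    (μ : ℝ) (hμ0 : 0 < μ) (hμ1 : μ < 1)
    (H : Matrix (Fin n) (Fin n) ℝ) (hH : H.PosDef) :
    (Matrix.fromBlocks
      (H + (H + (1 / μ) • (Aᵀ * A))ᵀ * (H + (1 / μ) • (Aᵀ * A))
        + (1 / μ - 1) • (Aᵀ * A))
      (Hᵀ * Aᵀ + (1 / μ) • (Aᵀ * A * Aᵀ))
      (A * H + (1 / μ) • (A * Aᵀ * A))
      (A * Aᵀ)).PosDef := by
  classical
  have hc0 : 0 ≤ 1 / μ - 1 := by
    rw [sub_nonneg, le_div_iff₀ hμ0]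
    linarith
  -- rows of A are linearly independent, so `Aᵀ *ᵥ ·` is injective
  have hli : LinearIndependent ℝ (fun i => A i) := by
    change LinearIndependent ℝ A.row
    rw [linearIndependent_iff_card_eq_finrank_span, Set.finrank,
      ← Matrix.rank_eq_finrank_span_row, hA, Fintype.card_fin]
  have hinj : Function.Injective A.vecMul := Matrix.vecMul_injective_iff.mpr hli
  have hATinj : ∀ y : Fin p → ℝ, y ≠ 0 → Aᵀ *ᵥ y ≠ 0 := by
    intro y hy h0
    apply hy
    apply hinj
    show y ᵥ* A = 0 ᵥ* A
    rw [Matrix.zero_vecMul, ← Matrix.mulVec_transpose, h0]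
  set B := H + (1 / μ) • (Aᵀ * A) with hBdef
  set X := H + (1 / μ - 1) • (Aᵀ * A) with hXdef
  set M : Matrix (Fin n ⊕ Fin p) (Fin n ⊕ Fin p) ℝ := fromBlocks B Aᵀ 0 0 with hM
  set P : Matrix (Fin n ⊕ Fin p) (Fin n ⊕ Fin p) ℝ := fromBlocks X 0 0 0 with hP
  have hQ : (Matrix.fromBlocks
      (H + (H + (1 / μ) • (Aᵀ * A))ᵀ * (H + (1 / μ) • (Aᵀ * A))
        + (1 / μ - 1) • (Aᵀ * A))
      (Hᵀ * Aᵀ + (1 / μ) • (Aᵀ * A * Aᵀ))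
      (A * H + (1 / μ) • (A * Aᵀ * A))
      (A * Aᵀ)) = P + Mᵀ * M := by
    rw [hM, hP, fromBlocks_transpose, fromBlocks_multiply, fromBlocks_add, hBdef, hXdef]
    simp only [transpose_add, transpose_smul, transpose_mul, transpose_transpose,
      transpose_zero, Matrix.zero_mul, Matrix.mul_zero, add_zero, zero_add,
      Matrix.add_mul, Matrix.mul_add, Matrix.smul_mul, Matrix.mul_smul,
      Matrix.mul_assoc, smul_add]
    abel_nf
  rw [hQ]
  have hXpd : X.PosDef :=
    hH.add_posSemidef (smul_posSemidef' hc0 (posSemidef_conjTranspose_mul_self A))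
  have hMTM : (Mᵀ * M).PosSemidef := by
    have := posSemidef_conjTranspose_mul_self M
    rwa [conjTranspose_eq_transpose_of_trivial] at this
  rw [posDef_iff_dotProduct_mulVec]
  constructor
  · refine IsHermitian.add ?_ hMTM.1
    rw [hP]
    exact isHermitian_fromBlocks_iff.mpr ⟨hXpd.isHermitian, by simp, by simp, isHermitian_zero⟩
  · intro x hx
    set x₁ := x ∘ Sum.inl with hx1
    set x₂ := x ∘ Sum.inr with hx2
    have hxe : x = Sum.elim x₁ x₂ := (Sum.elim_comp_inl_inr x).symm
    have hterm1 : star x ⬝ᵥ P *ᵥ x = x₁ ⬝ᵥ X *ᵥ x₁ := by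
      rw [star_trivial, hP]
      conv_lhs => rw [hxe]
      rw [fromBlocks_mulVec]
      simp [sumElim_dotProduct_sumElim]
    have hterm2 : star x ⬝ᵥ (Mᵀ * M) *ᵥ x = (M *ᵥ x) ⬝ᵥ (M *ᵥ x) := by
      rw [star_trivial, ← Matrix.mulVec_mulVec, Matrix.dotProduct_mulVec,
        Matrix.vecMul_transpose]
    rw [add_mulVec, dotProduct_add, hterm1, hterm2]
    by_cases h1 : x₁ = 0
    · have h2 : x₂ ≠ 0 := by
        intro h2
        apply hx
        rw [hxe, h1, h2]
        ext (i | i) <;> rfl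
      have hMx : M *ᵥ x = Sum.elim (Aᵀ *ᵥ x₂) 0 := by
        conv_lhs => rw [hxe]
        rw [hM, fromBlocks_mulVec]
        simp [h1]
      have hpos : 0 < (M *ᵥ x) ⬝ᵥ (M *ᵥ x) := by
        rw [hMx, sumElim_dotProduct_sumElim]
        have h3 : Aᵀ *ᵥ x₂ ≠ 0 := hATinj x₂ h2
        have := dotProduct_self_star_pos_iff (v := Aᵀ *ᵥ x₂) (R := ℝ)
        simp only [star_trivial] at this
        simpa using (this.mpr h3)
      rw [h1]
      simpa using hpos
    · have hpos1 : 0 < x₁ ⬝ᵥ X *ᵥ x₁ := by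
        have := (posDef_iff_dotProduct_mulVec.mp hXpd).2 h1
        rwa [star_trivial] at this
      have hnn : 0 ≤ (M *ᵥ x) ⬝ᵥ (M *ᵥ x) := by
        have := hMTM.dotProduct_mulVec_nonneg x
        rwa [hterm2] at this
      linarith
end

section
/- Let f : ℝⁿ → ℝ be convex and G = {x : g(x) ≤ 0} with g having convex components. Suppose x* minimizes f over {x : Ax = b} ∩ G, there exists (λ*, ν*) ∈ ℝᵖ × ℝ^m with ν* ≥ 0 such that 0 ∈ ∂f(x*) + Aᵀλ* + Σ_k ν*_k ∂g_k(x*), ν*_k g_k(x*) = 0 for all k, Ax* = b and g(x*) ≤ 0. Then for any κ ≥ ‖ν*‖_∞ and μ > 0, the pair (x*, λ*) is a saddle point of L(x,λ) = f(x) + (1/(2μ))‖Ax−b‖² + ⟨λ, Ax−b⟩ + κ Σ_k max{0, g_k(x)}. -/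
open Matrix

theorem kkt_implies_saddle_point {n p m : ℕ}
    (f : (Fin n → ℝ) → ℝ) (hf : ConvexOn ℝ Set.univ f)
    (g : Fin m → (Fin n → ℝ) → ℝ) (hg : ∀ k, ConvexOn ℝ Set.univ (g k))
    (A : Matrix (Fin p) (Fin n) ℝ) (b : Fin p → ℝ)
    (xs : Fin n → ℝ) (lams : Fin p → ℝ) (nus : Fin m → ℝ)
    (hmin : ∀ x, A.mulVec x = b → (∀ k, g k x ≤ 0) → f xs ≤ f x)
    (hnus : ∀ k, 0 ≤ nus k)
    (hstat : ∃ ξf : Fin n → ℝ, (∀ y, f y ≥ f xs + ξf ⬝ᵥ (y - xs)) ∧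
      ∃ ξg : Fin m → (Fin n → ℝ),
        (∀ k, ∀ y, g k y ≥ g k xs + ξg k ⬝ᵥ (y - xs)) ∧
        ξf + Aᵀ.mulVec lams + ∑ k, nus k • ξg k = 0)
    (hcs : ∀ k, nus k * g k xs = 0)
    (hfeas₁ : A.mulVec xs = b) (hfeas₂ : ∀ k, g k xs ≤ 0)
    (κ μ : ℝ) (hκ : ∀ k, nus k ≤ κ) (hμ : 0 < μ)
    (L : (Fin n → ℝ) → (Fin p → ℝ) → ℝ)
    (hL : ∀ x lam, L x lam = f x
      + (1 / (2 * μ)) * ((A.mulVec x - b) ⬝ᵥ (A.mulVec x - b))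
      + lam ⬝ᵥ (A.mulVec x - b)
      + κ * ∑ k, max 0 (g k x)) :
    (∀ lam, L xs lam ≤ L xs lams) ∧ (∀ x, L xs lams ≤ L x lams) := by
  have hzero : A.mulVec xs - b = 0 := by rw [hfeas₁]; simp
  have hLxs : ∀ lam, L xs lam = f xs + κ * ∑ k, max 0 (g k xs) := by
    intro lam
    rw [hL, hzero]
    simp
  constructor
  · intro lam; rw [hLxs lam, hLxs lams]
  · intro x
    obtain ⟨ξf, hξf, ξg, hξg, hsum⟩ := hstat
    have hLxsval : L xs lams = f xs := by
      rw [hLxs lams]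
      have : ∑ k, max 0 (g k xs) = 0 := by
        apply Finset.sum_eq_zero
        intro k _
        exact max_eq_left (hfeas₂ k)
      rw [this]; ring
    rw [hLxsval, hL]
    -- quadratic term nonneg
    have hquad : 0 ≤ (1 / (2 * μ)) * ((A.mulVec x - b) ⬝ᵥ (A.mulVec x - b)) := by
      apply mul_nonneg
      · positivity
      · exact Finset.sum_nonneg fun i _ => mul_self_nonneg _
    -- linear term
    have hlin : lams ⬝ᵥ (A.mulVec x - b) = Aᵀ.mulVec lams ⬝ᵥ (x - xs) := by
      rw [← hfeas₁, ← Matrix.mulVec_sub, Matrix.dotProduct_mulVec, ← Matrix.mulVec_transpose]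
    -- penalty term
    have hpen : ∀ k, nus k * (ξg k ⬝ᵥ (x - xs)) ≤ κ * max 0 (g k x) := by
      intro k
      have h1 : nus k * (ξg k ⬝ᵥ (x - xs)) ≤ nus k * g k x := by
        have := hξg k x
        have h2 : nus k * (g k xs + ξg k ⬝ᵥ (x - xs)) ≤ nus k * g k x :=
          mul_le_mul_of_nonneg_left this (hnus k)
        rw [mul_add, hcs k, zero_add] at h2
        exact h2
      refine h1.trans ?_
      rcases le_or_gt 0 (g k x) with h | h
      · rw [max_eq_right h]
        exact mul_le_mul_of_nonneg_right (hκ k) h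
      · rw [max_eq_left h.le, mul_zero]
        exact mul_nonpos_of_nonneg_of_nonpos (hnus k) h.le
    have hpensum : (∑ k, nus k • ξg k) ⬝ᵥ (x - xs) ≤ κ * ∑ k, max 0 (g k x) := by
      have hsd : (∑ k, nus k • ξg k) ⬝ᵥ (x - xs) = ∑ k, nus k * (ξg k ⬝ᵥ (x - xs)) := by
        simp only [dotProduct, Finset.sum_apply, Pi.smul_apply, smul_eq_mul,
          Finset.sum_mul, Finset.mul_sum, mul_assoc]
        rw [Finset.sum_comm]
      rw [hsd, Finset.mul_sum]
      exact Finset.sum_le_sum fun k _ => hpen k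
    have key : f xs ≤ f x + lams ⬝ᵥ (A.mulVec x - b) + κ * ∑ k, max 0 (g k x) := by
      have hfx := hξf x
      have : ξf ⬝ᵥ (x - xs) + Aᵀ.mulVec lams ⬝ᵥ (x - xs)
          + (∑ k, nus k • ξg k) ⬝ᵥ (x - xs) = 0 := by
        rw [← add_dotProduct, ← add_dotProduct, hsum, zero_dotProduct]
      nlinarith [hpensum, hfx, this, hlin]
    linarith
end

section
/- Let f : ℝⁿ → ℝ be continuously differentiable with ∇f locally Lipschitz, and suppose every matrix in the generalized Hessian ∂(∇f)(x) is positive semidefinite with all eigenvalues at least m > 0, for every x. Then for all x, y ∈ ℝⁿ: ⟨x − y, ∇f(x) − ∇f(y)⟩ ≥ m‖x − y‖². -/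
open scoped RealInnerProductSpace
open Filter

/-- The generalized Hessian of a `C¹` function with locally Lipschitz gradient `f'`:
the convex hull of all limits of Hessians (Jacobians of `f'`) at nearby points of
differentiability of `f'`. -/
def genHessian {n : ℕ} (f' : EuclideanSpace ℝ (Fin n) → EuclideanSpace ℝ (Fin n))
    (x : EuclideanSpace ℝ (Fin n)) : Set (Matrix (Fin n) (Fin n) ℝ) :=
  convexHull ℝ {H : Matrix (Fin n) (Fin n) ℝ |
    ∃ (u : ℕ → EuclideanSpace ℝ (Fin n)) (Hs : ℕ → Matrix (Fin n) (Fin n) ℝ),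
      Tendsto u atTop (nhds x) ∧ Tendsto Hs atTop (nhds H) ∧
      ∀ i, HasFDerivAt f'
        (LinearMap.toContinuousLinearMap (Matrix.toEuclideanLin (Hs i))) (u i)}

open MeasureTheory Metric Set

/-- At a point of differentiability, the Jacobian matrix of `f'` belongs to the generalized
Hessian, so it inherits the uniform positivity bound. -/
lemma fderiv_inner_lower {n : ℕ} {f' : EuclideanSpace ℝ (Fin n) → EuclideanSpace ℝ (Fin n)}
    {m : ℝ}
    (hH : ∀ x, ∀ H ∈ genHessian f' x, ∀ v : EuclideanSpace ℝ (Fin n),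
      m * ‖v‖ ^ 2 ≤ ⟪Matrix.toEuclideanLin H v, v⟫)
    {p : EuclideanSpace ℝ (Fin n)} (h : DifferentiableAt ℝ f' p)
    (d : EuclideanSpace ℝ (Fin n)) :
    m * ‖d‖ ^ 2 ≤ ⟪(fderiv ℝ f' p) d, d⟫ := by
  set H : Matrix (Fin n) (Fin n) ℝ :=
    Matrix.toEuclideanLin.symm ((fderiv ℝ f' p : EuclideanSpace ℝ (Fin n) →ₗ[ℝ]
      EuclideanSpace ℝ (Fin n))) with hHdef
  have hHL : Matrix.toEuclideanLin H = (fderiv ℝ f' p :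
      EuclideanSpace ℝ (Fin n) →ₗ[ℝ] EuclideanSpace ℝ (Fin n)) := by
    rw [hHdef, LinearEquiv.apply_symm_apply]
  have hCLM : LinearMap.toContinuousLinearMap (Matrix.toEuclideanLin H) = fderiv ℝ f' p := by
    apply ContinuousLinearMap.coe_injective
    rw [hHL, LinearMap.coe_toContinuousLinearMap]
  have hmem : H ∈ genHessian f' p := by
    apply subset_convexHull
    refine ⟨fun _ => p, fun _ => H, tendsto_const_nhds, tendsto_const_nhds, fun i => ?_⟩
    rw [hCLM]
    exact h.hasFDerivAt
  have := hH p H hmem d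
  rwa [show Matrix.toEuclideanLin H d = (fderiv ℝ f' p) d by rw [hHL]; rfl] at this

/-- On a neighbourhood of a compact set, a locally Lipschitz map admits a uniform Lipschitz
radius/constant, and it is almost everywhere differentiable there. -/
lemma exists_unif_lip {n : ℕ} {f' : EuclideanSpace ℝ (Fin n) → EuclideanSpace ℝ (Fin n)}
    (hlip : LocallyLipschitz f') {S : Set (EuclideanSpace ℝ (Fin n))}
    (hS : IsCompact S) (hSne : S.Nonempty) :
    ∃ (δ : ℝ) (K : NNReal) (U : Set (EuclideanSpace ℝ (Fin n))),
      0 < δ ∧ (∀ z ∈ S, ball z δ ⊆ U) ∧ (∀ z ∈ S, LipschitzOnWith K f' (ball z δ)) ∧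
      (∀ᵐ a, a ∈ U → DifferentiableAt ℝ f' a) := by
  have h1 : ∀ p : EuclideanSpace ℝ (Fin n), ∃ (K : NNReal) (ε : ℝ),
      0 < ε ∧ LipschitzOnWith K f' (ball p (2 * ε)) := by
    intro p
    obtain ⟨K, t, ht, hK⟩ := hlip p
    obtain ⟨ε, hε, hball⟩ := Metric.mem_nhds_iff.1 ht
    exact ⟨K, ε / 2, by linarith, (hK.mono (by
      intro a ha; apply hball; simpa [show 2 * (ε / 2) = ε by ring] using ha))⟩
  choose K ε hεpos hKlip using h1
  obtain ⟨F, hFS, hFfin, hcover⟩ := hS.elim_finite_subcover_image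
    (fun p _ => isOpen_ball (x := p) (ε := ε p)) (by
      intro z hz
      exact mem_iUnion₂.2 ⟨z, hz, mem_ball_self (hεpos z)⟩)
  obtain ⟨p₀, hp₀⟩ := hSne
  have hFne : F.Nonempty := by
    rcases mem_iUnion₂.1 (hcover hp₀) with ⟨q, hq, _⟩
    exact ⟨q, hq⟩
  set Ft := hFfin.toFinset with hFt
  have hFtne : Ft.Nonempty := by
    simpa [hFt, Set.Finite.toFinset_nonempty] using hFne
  set δ : ℝ := Ft.inf' hFtne ε with hδdef
  set Km : NNReal := Ft.sup' hFtne K with hKm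
  set U : Set (EuclideanSpace ℝ (Fin n)) := ⋃ p ∈ Ft, ball p (2 * ε p) with hU
  have hδpos : 0 < δ := by
    rw [hδdef]
    rw [Finset.lt_inf'_iff]
    intro p _
    exact hεpos p
  refine ⟨δ, Km, U, hδpos, ?_, ?_, ?_⟩
  · intro z hz
    rcases mem_iUnion₂.1 (hcover hz) with ⟨q, hq, hzq⟩
    have hqFt : q ∈ Ft := by simpa [hFt] using hq
    intro a ha
    apply mem_iUnion₂.2 ⟨q, hqFt, ?_⟩
    have hδq : δ ≤ ε q := Finset.inf'_le _ hqFt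
    calc dist a q ≤ dist a z + dist z q := dist_triangle a z q
      _ < δ + ε q := add_lt_add (mem_ball.1 ha) (mem_ball.1 hzq)
      _ ≤ 2 * ε q := by linarith
  · intro z hz
    rcases mem_iUnion₂.1 (hcover hz) with ⟨q, hq, hzq⟩
    have hqFt : q ∈ Ft := by simpa [hFt] using hq
    have hδq : δ ≤ ε q := Finset.inf'_le _ hqFt
    have hsub : ball z δ ⊆ ball q (2 * ε q) := by
      intro a ha
      calc dist a q ≤ dist a z + dist z q := dist_triangle a z q
        _ < δ + ε q := add_lt_add (mem_ball.1 ha) (mem_ball.1 hzq)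
        _ ≤ 2 * ε q := by linarith
    have := (hKlip q).mono hsub
    intro a ha b hb
    calc edist (f' a) (f' b) ≤ K q * edist a b := this ha hb
      _ ≤ Km * edist a b := by
        gcongr
        exact_mod_cast ENNReal.coe_le_coe.2 (Finset.le_sup' _ hqFt)
  · have hae : ∀ p ∈ Ft, ∀ᵐ a, a ∈ ball p (2 * ε p) → DifferentiableAt ℝ f' a := by
      intro p _
      filter_upwards [(hKlip p).ae_differentiableWithinAt_of_mem] with a ha hmem
      exact (ha hmem).differentiableAt ((isOpen_ball).mem_nhds hmem)
    have := (ae_ball_iff (Ft.countable_toSet)).2 hae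
    filter_upwards [this] with a ha hmem
    rcases mem_iUnion₂.1 hmem with ⟨p, hp, hball⟩
    exact ha p hp hball

/-- Fubini along lines: a null set misses almost every line in direction `d`. -/
lemma ae_slice {n : ℕ} (g : Set (EuclideanSpace ℝ (Fin n))) (hg : volume g = 0)
    (y d : EuclideanSpace ℝ (Fin n)) :
    ∀ᵐ w : EuclideanSpace ℝ (Fin n), ∀ᵐ t : ℝ, y + w + t • d ∉ g := by
  set g' := toMeasurable volume g with hg'def
  have hm : MeasurableSet g' := measurableSet_toMeasurable _ _
  have hg' : volume g' = 0 := by rw [hg'def, measure_toMeasurable]; exact hg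
  suffices h : ∀ᵐ w : EuclideanSpace ℝ (Fin n), ∀ᵐ t : ℝ, y + w + t • d ∉ g' by
    filter_upwards [h] with w hw
    filter_upwards [hw] with t ht hmem
    exact ht (subset_toMeasurable _ _ hmem)
  set A : Set (ℝ × EuclideanSpace ℝ (Fin n)) := {q | y + q.2 + q.1 • d ∈ g'} with hA
  have hAcont : Continuous (fun q : ℝ × EuclideanSpace ℝ (Fin n) => y + q.2 + q.1 • d) := by
    fun_prop
  have hAmeas : MeasurableSet A := hAcont.measurable hm
  have hAnull : ((volume : Measure ℝ).prod
      (volume : Measure (EuclideanSpace ℝ (Fin n)))) A = 0 := by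
    rw [MeasureTheory.Measure.measure_prod_null hAmeas]
    refine Filter.Eventually.of_forall fun t => ?_
    have heq : Prod.mk t ⁻¹' A
        = (fun w : EuclideanSpace ℝ (Fin n) => (y + t • d) + w) ⁻¹' g' := by
      have hpt : ∀ w : EuclideanSpace ℝ (Fin n), y + w + t • d = (y + t • d) + w :=
        fun w => by module
      ext w
      simp only [hA, mem_preimage, mem_setOf_eq, hpt]
    simp only [heq, measure_preimage_add]
    exact hg'
  set B : Set (EuclideanSpace ℝ (Fin n) × ℝ) := {q | y + q.1 + q.2 • d ∈ g'} with hB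
  have hBmeas : MeasurableSet B := by
    have : Continuous (fun q : EuclideanSpace ℝ (Fin n) × ℝ => y + q.1 + q.2 • d) := by fun_prop
    exact this.measurable hm
  have hswap : Prod.swap ⁻¹' B = A := rfl
  have hBnull : ((volume : Measure (EuclideanSpace ℝ (Fin n))).prod
      (volume : Measure ℝ)) B = 0 := by
    rw [← MeasureTheory.Measure.prod_swap, MeasureTheory.Measure.map_apply measurable_swap hBmeas,
      hswap]
    exact hAnull
  have hslice := MeasureTheory.Measure.measure_ae_null_of_prod_null hBnull
  filter_upwards [hslice] with w hw
  rw [MeasureTheory.ae_iff]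
  simpa using (show volume {a : ℝ | y + w + a • d ∈ g'} = 0 from hw)

/-- The key one-dimensional estimate, proved by dominated convergence applied to
difference quotients along the segment. -/
lemma line_mono {n : ℕ} {f' : EuclideanSpace ℝ (Fin n) → EuclideanSpace ℝ (Fin n)}
    (hcont : Continuous f') {m C : ℝ} {d b : EuclideanSpace ℝ (Fin n)} {hj : ℕ → ℝ}
    (hjpos : ∀ j, 0 < hj j) (hj0 : Tendsto hj atTop (nhds 0))
    (hdiff : ∀ᵐ t : ℝ, t ∈ Set.Ioc (0:ℝ) 1 → DifferentiableAt ℝ f' (b + t • d))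
    (hlow : ∀ t ∈ Set.Ioc (0:ℝ) 1, DifferentiableAt ℝ f' (b + t • d) →
      m * ‖d‖ ^ 2 ≤ ⟪(fderiv ℝ f' (b + t • d)) d, d⟫)
    (hbound : ∀ j, ∀ t ∈ Set.Ioc (0:ℝ) 1,
      ‖f' (b + (t + hj j) • d) - f' (b + t • d)‖ ≤ C * hj j) :
    m * ‖d‖ ^ 2 ≤ ⟪f' (b + d) - f' b, d⟫ := by
  set c : ℝ → EuclideanSpace ℝ (Fin n) := fun t => b + t • d with hc
  have hccont : Continuous c := by fun_prop
  set φ : ℝ → ℝ := fun t => ⟪f' (c t), d⟫ with hφ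
  have hφcont : Continuous φ := (hcont.comp hccont).inner continuous_const
  set ψ : ℝ → ℝ := fun t => max (m * ‖d‖ ^ 2) ⟪(fderiv ℝ f' (c t)) d, d⟫ with hψ
  set g : ℕ → ℝ → ℝ := fun j t => (φ (t + hj j) - φ t) / hj j with hg
  have hderiv : ∀ t : ℝ, DifferentiableAt ℝ f' (c t) →
      HasDerivAt φ ⟪(fderiv ℝ f' (c t)) d, d⟫ t := by
    intro t ht
    have h1 : HasDerivAt c d t := by
      simpa [hc] using (HasDerivAt.const_add b (((hasDerivAt_id t).smul_const d)))
    have h2 : HasDerivAt (fun s => f' (c s)) ((fderiv ℝ f' (c t)) d) t :=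
      ht.hasFDerivAt.comp_hasDerivAt t h1
    simpa using (h2.inner ℝ (hasDerivAt_const t d))
  have hseq : ∀ a : ℝ, Tendsto (fun j => a + hj j) atTop (nhdsWithin a {a}ᶜ) := by
    intro a
    apply tendsto_nhdsWithin_of_tendsto_nhds_of_eventually_within
    · simpa using tendsto_const_nhds.add hj0
    · exact Eventually.of_forall fun j => by
        simp [Set.mem_compl_iff, (hjpos j).ne']
  have hgt : ∀ t : ℝ, DifferentiableAt ℝ f' (c t) →
      Tendsto (fun j => g j t) atTop (nhds ⟪(fderiv ℝ f' (c t)) d, d⟫) := by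
    intro t ht
    have h1 := hasDerivAt_iff_tendsto_slope.1 (hderiv t ht)
    have h2 := h1.comp (hseq t)
    apply h2.congr
    intro j
    simp only [Function.comp_apply, slope_def_field, add_sub_cancel_left]
    rfl
  set μ : Measure ℝ := volume.restrict (Set.Ioc (0:ℝ) 1) with hμ
  have hμfin : IsFiniteMeasure μ := by
    constructor
    rw [hμ, Measure.restrict_apply_univ, Real.volume_Ioc]
    simp
  have hgmeas : ∀ j, AEStronglyMeasurable (g j) μ := by
    intro j
    exact (((hφcont.comp (continuous_add_right (hj j))).sub hφcont).div_const
      (hj j)).aestronglyMeasurable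
  have hψmeas : AEStronglyMeasurable ψ μ := by
    have h1 : Measurable (fun t : ℝ => fderiv ℝ f' (c t)) :=
      (measurable_fderiv ℝ f').comp hccont.measurable
    have h2 : Continuous (fun L : EuclideanSpace ℝ (Fin n) →L[ℝ] EuclideanSpace ℝ (Fin n) =>
        (⟪L d, d⟫ : ℝ)) :=
      (((ContinuousLinearMap.apply ℝ (EuclideanSpace ℝ (Fin n))) d).continuous).inner
        continuous_const
    exact (measurable_const.max ((h2.measurable).comp h1)).aestronglyMeasurable
  have hae1 : ∀ᵐ t ∂μ, t ∈ Set.Ioc (0:ℝ) 1 := ae_restrict_mem measurableSet_Ioc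
  have hae2 : ∀ᵐ t ∂μ, t ∈ Set.Ioc (0:ℝ) 1 → DifferentiableAt ℝ f' (b + t • d) :=
    ae_restrict_of_ae hdiff
  have hlimae : ∀ᵐ t ∂μ, Tendsto (fun j => g j t) atTop (nhds (ψ t)) := by
    filter_upwards [hae1, hae2] with t ht hdt
    have hD := hdt ht
    have heq : ψ t = ⟪(fderiv ℝ f' (c t)) d, d⟫ := max_eq_right (hlow t ht hD)
    rw [heq]
    exact hgt t hD
  have hbae : ∀ j, ∀ᵐ t ∂μ, ‖g j t‖ ≤ C * ‖d‖ := by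
    intro j
    filter_upwards [hae1] with t ht
    have h1 := hbound j t ht
    have h2 : |φ (t + hj j) - φ t| ≤ C * hj j * ‖d‖ := by
      have e : φ (t + hj j) - φ t = ⟪f' (b + (t + hj j) • d) - f' (b + t • d), d⟫ := by
        rw [inner_sub_left]
      rw [e]
      calc |⟪f' (b + (t + hj j) • d) - f' (b + t • d), d⟫|
          ≤ ‖f' (b + (t + hj j) • d) - f' (b + t • d)‖ * ‖d‖ := abs_real_inner_le_norm _ _
        _ ≤ C * hj j * ‖d‖ := mul_le_mul_of_nonneg_right h1 (norm_nonneg d)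
    have h3 : ‖g j t‖ = |φ (t + hj j) - φ t| / hj j := by
      rw [Real.norm_eq_abs, abs_div, abs_of_pos (hjpos j)]
    rw [h3, div_le_iff₀ (hjpos j)]
    calc |φ (t + hj j) - φ t| ≤ C * hj j * ‖d‖ := h2
      _ = C * ‖d‖ * hj j := by ring
  have hDCT := tendsto_integral_of_dominated_convergence (F := g) (f := ψ)
    (fun _ => C * ‖d‖) hgmeas (integrable_const _) hbae hlimae
  have hballj := ae_all_iff.2 hbae
  have hψbd : ∀ᵐ t ∂μ, ‖ψ t‖ ≤ C * ‖d‖ := by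
    filter_upwards [hlimae, hballj] with t h1 h2
    exact le_of_tendsto h1.norm (Eventually.of_forall h2)
  have hψint : Integrable ψ μ := Integrable.mono' (integrable_const _) hψmeas hψbd
  have hμuniv : (μ Set.univ).toReal = 1 := by
    rw [hμ, Measure.restrict_apply_univ, Real.volume_Ioc]
    simp
  have hlower : m * ‖d‖ ^ 2 ≤ ∫ t, ψ t ∂μ := by
    have h0 : ∫ _t : ℝ, (m * ‖d‖ ^ 2) ∂μ = m * ‖d‖ ^ 2 := by
      rw [integral_const, measureReal_def, hμuniv, one_smul]
    rw [← h0]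
    exact integral_mono_ae (integrable_const _) hψint
      (Eventually.of_forall fun t => le_max_left _ _)
  set Ψ : ℝ → ℝ := fun u => ∫ s in (0:ℝ)..u, φ s with hΨ
  have hIφ : ∀ a b' : ℝ, IntervalIntegrable φ volume a b' := fun a b' =>
    hφcont.intervalIntegrable a b'
  have hcalc : ∀ j, ∫ t, g j t ∂μ = slope Ψ 1 (1 + hj j) - slope Ψ 0 (0 + hj j) := by
    intro j
    have hIφh : IntervalIntegrable (fun t => φ (t + hj j)) volume 0 1 :=
      (hφcont.comp (continuous_add_right (hj j))).intervalIntegrable 0 1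
    have e0 : ∫ t, g j t ∂μ = ∫ t in (0:ℝ)..1, g j t := by
      rw [intervalIntegral.integral_of_le zero_le_one, hμ]
    have e1 : ∫ t in (0:ℝ)..1, g j t
        = ((∫ t in (0:ℝ)..1, φ (t + hj j)) - ∫ t in (0:ℝ)..1, φ t) / hj j := by
      simp only [hg]
      rw [intervalIntegral.integral_div, intervalIntegral.integral_sub hIφh (hIφ 0 1)]
    have e2 : ∫ t in (0:ℝ)..1, φ (t + hj j) = ∫ t in (hj j)..(1 + hj j), φ t := by
      simpa using intervalIntegral.integral_comp_add_right φ (hj j)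
    have e3 : ∫ t in (hj j)..(1 + hj j), φ t = Ψ (1 + hj j) - Ψ (hj j) := by
      have h4 := intervalIntegral.integral_add_adjacent_intervals (hIφ 0 (hj j))
        (hIφ (hj j) (1 + hj j))
      simp only [hΨ]
      linarith
    have hΨ0 : Ψ 0 = 0 := intervalIntegral.integral_same
    rw [e0, e1, e2, e3, slope_def_field, slope_def_field, hΨ0]
    have hne : hj j ≠ 0 := (hjpos j).ne'
    rw [show Ψ 1 = ∫ t in (0:ℝ)..1, φ t from rfl]
    simp only [zero_add, sub_zero, add_sub_cancel_left]
    ring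
  have hΨd : ∀ a : ℝ, HasDerivAt Ψ (φ a) a := fun a =>
    intervalIntegral.integral_hasDerivAt_right (hIφ 0 a)
      (hφcont.stronglyMeasurableAtFilter _ _) hφcont.continuousAt
  have t1 : Tendsto (fun j => slope Ψ 1 (1 + hj j)) atTop (nhds (φ 1)) :=
    (hasDerivAt_iff_tendsto_slope.1 (hΨd 1)).comp (hseq 1)
  have t0 : Tendsto (fun j => slope Ψ 0 (0 + hj j)) atTop (nhds (φ 0)) :=
    (hasDerivAt_iff_tendsto_slope.1 (hΨd 0)).comp (hseq 0)
  have hlim2 : Tendsto (fun j => ∫ t, g j t ∂μ) atTop (nhds (φ 1 - φ 0)) := by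
    apply (t1.sub t0).congr
    intro j
    rw [hcalc j]
  have hEq : ∫ t, ψ t ∂μ = φ 1 - φ 0 := tendsto_nhds_unique hDCT hlim2
  have final : m * ‖d‖ ^ 2 ≤ φ 1 - φ 0 := hEq ▸ hlower
  have e5 : φ 1 - φ 0 = ⟪f' (b + d) - f' b, d⟫ := by
    simp only [hφ, hc, one_smul, zero_smul, add_zero]
    rw [inner_sub_left]
  rwa [e5] at final

theorem strong_monotonicity_from_generalized_hessian {n : ℕ}
    (f : EuclideanSpace ℝ (Fin n) → ℝ)
    (f' : EuclideanSpace ℝ (Fin n) → EuclideanSpace ℝ (Fin n))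
    (hgrad : ∀ x, HasGradientAt f (f' x) x)
    (hlip : LocallyLipschitz f')
    (m : ℝ) (hm : 0 < m)
    (hH : ∀ x, ∀ H ∈ genHessian f' x, ∀ v : EuclideanSpace ℝ (Fin n),
      m * ‖v‖ ^ 2 ≤ ⟪Matrix.toEuclideanLin H v, v⟫) :
    ∀ x y : EuclideanSpace ℝ (Fin n),
      ⟪x - y, f' x - f' y⟫ ≥ m * ‖x - y‖ ^ 2 := by
  intro x y
  set d : EuclideanSpace ℝ (Fin n) := x - y with hd
  have hxd : y + d = x := by rw [hd]; abel
  have hcont : Continuous f' := hlip.continuous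
  set S : Set (EuclideanSpace ℝ (Fin n)) := (fun t : ℝ => y + t • d) '' Set.Icc 0 1 with hS
  have hScomp : IsCompact S := isCompact_Icc.image (by fun_prop)
  have hSne : S.Nonempty := ⟨y, ⟨0, ⟨le_refl 0, zero_le_one⟩, by simp⟩⟩
  obtain ⟨δ, K, U, hδpos, hUball, hKlip, hae⟩ := exists_unif_lip hlip hScomp hSne
  set N : Set (EuclideanSpace ℝ (Fin n)) :=
    {a | a ∈ U ∧ ¬ DifferentiableAt ℝ f' a} with hN
  have hNnull : volume N = 0 := by
    have heq : N = {a | ¬ (a ∈ U → DifferentiableAt ℝ f' a)} := by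
      ext a; simp [hN, Classical.not_imp]
    rw [heq]
    exact ae_iff.1 hae
  have hslice := ae_slice N hNnull y d
  have hmemS : ∀ t : ℝ, t ∈ Set.Icc (0:ℝ) 1 → y + t • d ∈ S := by
    intro t ht; exact ⟨t, ht, rfl⟩
  have hchoice : ∀ j : ℕ, ∃ wj : EuclideanSpace ℝ (Fin n),
      ‖wj‖ < min ((1:ℝ)/(j+1)) (δ/2) ∧ ∀ᵐ t : ℝ, y + wj + t • d ∉ N := by
    intro j
    set r : ℝ := min ((1:ℝ)/(j+1)) (δ/2) with hr
    have hrpos : 0 < r := lt_min (by positivity) (by linarith)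
    by_contra hcon
    push_neg at hcon
    have hsub : Metric.ball (0:EuclideanSpace ℝ (Fin n)) r ⊆
        {w | ¬ ∀ᵐ t : ℝ, y + w + t • d ∉ N} := by
      intro w hw
      exact hcon w (by simpa [mem_ball, dist_zero_right] using hw)
    have h0 : volume {w : EuclideanSpace ℝ (Fin n) | ¬ ∀ᵐ t : ℝ, y + w + t • d ∉ N} = 0 :=
      ae_iff.1 hslice
    have h1 : volume (Metric.ball (0:EuclideanSpace ℝ (Fin n)) r) = 0 :=
      le_antisymm (le_trans (measure_mono hsub) h0.le) zero_le
    exact absurd h1 (Metric.measure_ball_pos volume 0 hrpos).ne'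
  choose w hwlt hwgood using hchoice
  have hwlim : Tendsto w atTop (nhds 0) := by
    rw [tendsto_zero_iff_norm_tendsto_zero]
    apply squeeze_zero (fun j => norm_nonneg _)
      (fun j => (lt_of_lt_of_le (hwlt j) (min_le_left _ _)).le)
    exact tendsto_one_div_add_atTop_nhds_zero_nat
  have hwhalf : ∀ j, ‖w j‖ < δ / 2 := fun j =>
    lt_of_lt_of_le (hwlt j) (min_le_right _ _)
  have hdpos : (0:ℝ) < ‖d‖ + 1 := by positivity
  -- the step sequence
  set hjseq : ℕ → ℝ := fun i => δ / (2 * (‖d‖ + 1) * ((i:ℝ) + 1)) with hhj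
  have hjpos : ∀ i, 0 < hjseq i := fun i => by
    rw [hhj]; positivity
  have hj0 : Tendsto hjseq atTop (nhds 0) := by
    have heq : hjseq = fun i : ℕ => (δ / (2 * (‖d‖ + 1))) * (1 / ((i:ℝ) + 1)) := by
      funext i
      rw [hhj]
      field_simp
    rw [heq]
    simpa using tendsto_one_div_add_atTop_nhds_zero_nat.const_mul (δ / (2 * (‖d‖ + 1)))
  have hjsmall : ∀ i, hjseq i * ‖d‖ < δ / 2 := by
    intro i
    rw [hhj]
    have hi1 : (1:ℝ) ≤ (i:ℝ) + 1 := by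
      have := Nat.cast_nonneg (α := ℝ) i
      linarith
    rw [div_mul_eq_mul_div, div_lt_div_iff₀ (by positivity) (by norm_num)]
    have h2 : (‖d‖ + 1) * 1 ≤ (‖d‖ + 1) * ((i:ℝ) + 1) :=
      mul_le_mul_of_nonneg_left hi1 hdpos.le
    nlinarith [mul_le_mul_of_nonneg_left h2 hδpos.le, hδpos, norm_nonneg d]
  -- per-j inequality
  have hkey : ∀ j, m * ‖d‖ ^ 2 ≤ ⟪f' (y + w j + d) - f' (y + w j), d⟫ := by
    intro j
    apply line_mono hcont hjpos hj0 (C := (K : ℝ) * ‖d‖) (b := y + w j)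
    · -- a.e. differentiability along the (shifted) segment
      filter_upwards [hwgood j] with t ht hIoc
      have htIcc : t ∈ Set.Icc (0:ℝ) 1 := ⟨hIoc.1.le, hIoc.2⟩
      have hzS : y + t • d ∈ S := hmemS t htIcc
      have hmemU : y + w j + t • d ∈ U := by
        apply hUball _ hzS
        rw [mem_ball, dist_eq_norm]
        have : y + w j + t • d - (y + t • d) = w j := by module
        rw [this]
        linarith [hwhalf j]
      by_contra hnd
      exact ht ⟨hmemU, hnd⟩
    · intro t ht hD
      exact fderiv_inner_lower hH hD d
    · -- the uniform Lipschitz bound on difference quotients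
      intro i t hIoc
      have htIcc : t ∈ Set.Icc (0:ℝ) 1 := ⟨hIoc.1.le, hIoc.2⟩
      have hzS : y + t • d ∈ S := hmemS t htIcc
      have hmem1 : y + w j + t • d ∈ Metric.ball (y + t • d) δ := by
        rw [mem_ball, dist_eq_norm]
        have : y + w j + t • d - (y + t • d) = w j := by module
        rw [this]
        linarith [hwhalf j]
      have hmem2 : y + w j + (t + hjseq i) • d ∈ Metric.ball (y + t • d) δ := by
        rw [mem_ball, dist_eq_norm]
        have : y + w j + (t + hjseq i) • d - (y + t • d) = w j + hjseq i • d := by module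
        rw [this]
        calc ‖w j + hjseq i • d‖ ≤ ‖w j‖ + ‖hjseq i • d‖ := norm_add_le _ _
          _ = ‖w j‖ + hjseq i * ‖d‖ := by
            rw [norm_smul, Real.norm_eq_abs, abs_of_pos (hjpos i)]
          _ < δ / 2 + δ / 2 := add_lt_add (hwhalf j) (hjsmall i)
          _ = δ := by ring
      have hLip := (hKlip _ hzS).dist_le_mul _ hmem2 _ hmem1
      have hdiffeq : y + w j + (t + hjseq i) • d - (y + w j + t • d) = hjseq i • d := by
        module
      rw [dist_eq_norm, dist_eq_norm, hdiffeq] at hLip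
      calc ‖f' (y + w j + (t + hjseq i) • d) - f' (y + w j + t • d)‖
          ≤ (K : ℝ) * ‖hjseq i • d‖ := hLip
        _ = (K : ℝ) * ‖d‖ * hjseq i := by
            rw [norm_smul, Real.norm_eq_abs, abs_of_pos (hjpos i)]
            ring
  -- pass to the limit in j
  have hptlim1 : Tendsto (fun j => y + w j + d) atTop (nhds x) := by
    have h1 : Tendsto (fun j => y + w j + d) atTop (nhds (y + 0 + d)) :=
      (tendsto_const_nhds.add hwlim).add tendsto_const_nhds
    simpa [hxd] using h1
  have hptlim0 : Tendsto (fun j => y + w j) atTop (nhds y) := by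
    have h1 : Tendsto (fun j => y + w j) atTop (nhds (y + 0)) :=
      tendsto_const_nhds.add hwlim
    simpa using h1
  have hlim : Tendsto (fun j => ⟪f' (y + w j + d) - f' (y + w j), d⟫) atTop
      (nhds ⟪f' x - f' y, d⟫) := by
    exact (((hcont.tendsto x).comp hptlim1).sub ((hcont.tendsto y).comp hptlim0)).inner
      tendsto_const_nhds
  have hfinal : m * ‖d‖ ^ 2 ≤ ⟪f' x - f' y, d⟫ :=
    le_of_tendsto_of_tendsto' tendsto_const_nhds hlim hkey
  rw [ge_iff_le, real_inner_comm]
  exact hfinal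
end
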